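/- Let A ∈ ℝ^{n×n}, B ∈ ℝ^{m×m}, C := diag(A,B), k ∈ {1,…,n+m}, r := C(n+m, k), i₁ := max{0, k−n}, i₂ := min{m, k}. Then there exists a permutation matrix P ∈ ℝ^{r×r} such that C^{[k]} = P · diag_{i∈{i₁,…,i₂}}(A^{[k−i]} ⊕ B^{[i]}) · P⁻¹, where M^{[0]} := 0 and A ⊕ B := A ⊗ I_m + I_n ⊗ B is the Kronecker sum. -/

import Mathlib

open Matrix

/-- The `k`-th multiplicative compound of a matrix (with `M^{(0)} = 1`). -/
noncomputable def mulCompound {R : Type*} [CommRing R] {n m : ℕ} (k : ℕ)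
    (A : Matrix (Fin n) (Fin m) R) :
    Matrix {s : Finset (Fin n) // s.card = k} {s : Finset (Fin m) // s.card = k} R :=
  fun α β => (A.submatrix (α.1.orderEmbOfFin α.2) (β.1.orderEmbOfFin β.2)).det

/-- The `k`-th additive compound `A^{[k]} := (d/dt)(exp(At))^{(k)}|_{t=0}`
(with `M^{[0]} = 0`). -/
noncomputable def addCompound {n : ℕ} (k : ℕ) (A : Matrix (Fin n) (Fin n) ℝ) :
    Matrix {s : Finset (Fin n) // s.card = k} {s : Finset (Fin n) // s.card = k} ℝ :=
  fun α β => deriv (fun t : ℝ => mulCompound k (NormedSpace.exp (t • A)) α β) 0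

/-- The block-diagonal matrix `diag(A,B) ∈ ℝ^{(n+m)×(n+m)}`. -/
noncomputable def diagBlocks {n m : ℕ} (A : Matrix (Fin n) (Fin n) ℝ)
    (B : Matrix (Fin m) (Fin m) ℝ) : Matrix (Fin (n + m)) (Fin (n + m)) ℝ :=
  (Matrix.fromBlocks A 0 0 B).submatrix finSumFinEquiv.symm finSumFinEquiv.symm

/-- The Kronecker sum `A ⊕ B := A ⊗ I + I ⊗ B`. -/
noncomputable def kroneckerSum {ι κ : Type*} [Fintype ι] [Fintype κ]
    [DecidableEq ι] [DecidableEq κ] (A : Matrix ι ι ℝ) (B : Matrix κ κ ℝ) :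
    Matrix (ι × κ) (ι × κ) ℝ :=
  Matrix.kroneckerMap (· * ·) A 1 + Matrix.kroneckerMap (· * ·) 1 B

namespace ACProof

variable {n m : ℕ}

def splitL (s : Finset (Fin (n + m))) : Finset (Fin n) :=
  (s.map finSumFinEquiv.symm.toEmbedding).toLeft

def splitR (s : Finset (Fin (n + m))) : Finset (Fin m) :=
  (s.map finSumFinEquiv.symm.toEmbedding).toRight

lemma mem_splitL {s : Finset (Fin (n + m))} {a : Fin n} :
    a ∈ splitL s ↔ finSumFinEquiv (Sum.inl a) ∈ s := by
  simp [splitL, Equiv.symm_apply_eq]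

lemma mem_splitR {s : Finset (Fin (n + m))} {b : Fin m} :
    b ∈ splitR s ↔ finSumFinEquiv (Sum.inr b) ∈ s := by
  simp [splitR, Equiv.symm_apply_eq]

lemma card_split (s : Finset (Fin (n + m))) :
    (splitL s).card + (splitR s).card = s.card := by
  rw [splitL, splitR, Finset.card_toLeft_add_card_toRight, Finset.card_map]

lemma finSumFinEquiv_symm_eq {j i : ℕ} (q : Fin (j + i)) :
    finSumFinEquiv.symm q = if h : (q : ℕ) < j then Sum.inl ⟨q, h⟩
      else Sum.inr ⟨q - j, by omega⟩ := by
  apply finSumFinEquiv.injective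
  rw [Equiv.apply_symm_apply]
  split_ifs with h
  · rw [finSumFinEquiv_apply_left]; ext; simp
  · rw [finSumFinEquiv_apply_right]; ext; simp; omega

lemma orderEmbOfFin_eq_sum {k : ℕ} {s : Finset (Fin (n + m))} (hs : s.card = k) {j i : ℕ}
    (hL : (splitL s).card = j) (hR : (splitR s).card = i) (hji : k = j + i) (p : Fin k) :
    s.orderEmbOfFin hs p =
      finSumFinEquiv (Sum.map ((splitL s).orderEmbOfFin hL) ((splitR s).orderEmbOfFin hR)
        (finSumFinEquiv.symm (Fin.cast hji p))) := by
  set F : Fin k → Fin (n + m) := fun p =>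
    finSumFinEquiv (Sum.map ((splitL s).orderEmbOfFin hL) ((splitR s).orderEmbOfFin hR)
      (finSumFinEquiv.symm (Fin.cast hji p))) with hF
  have hval : ∀ p : Fin k, (F p : ℕ) =
      if h : (p : ℕ) < j then ((splitL s).orderEmbOfFin hL ⟨p, h⟩ : ℕ)
      else n + ((splitR s).orderEmbOfFin hR ⟨(p : ℕ) - j, by omega⟩ : ℕ) := by
    intro p
    rw [hF]
    simp only [finSumFinEquiv_symm_eq, Fin.coe_cast]
    split_ifs with h
    · simp [finSumFinEquiv_apply_left]
    · simp [finSumFinEquiv_apply_right]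
  have hmem : ∀ p, F p ∈ s := by
    intro p
    rw [hF]
    simp only [finSumFinEquiv_symm_eq, Fin.coe_cast]
    split_ifs with h
    · simpa only [Sum.map_inl] using mem_splitL.mp (Finset.orderEmbOfFin_mem _ hL ⟨p, h⟩)
    · simpa only [Sum.map_inr] using
        mem_splitR.mp (Finset.orderEmbOfFin_mem _ hR ⟨(p : ℕ) - j, by omega⟩)
  have hmono : StrictMono F := by
    intro p q hpq
    rw [Fin.lt_def] at hpq ⊢
    rw [hval p, hval q]
    split_ifs with h1 h2 h2
    · exact ((splitL s).orderEmbOfFin hL).strictMono (show (⟨p, h1⟩ : Fin j) < ⟨q, h2⟩ from hpq)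
    · calc ((splitL s).orderEmbOfFin hL ⟨p, h1⟩ : ℕ) < n :=
            ((splitL s).orderEmbOfFin hL ⟨p, h1⟩).isLt
        _ ≤ _ := Nat.le_add_right _ _
    · omega
    · have := ((splitR s).orderEmbOfFin hR).strictMono
        (show (⟨(p:ℕ) - j, by omega⟩ : Fin i) < ⟨(q:ℕ) - j, by omega⟩ by
          simp only [Fin.mk_lt_mk]; omega)
      rw [Fin.lt_def] at this

      omega
  rw [← Finset.orderEmbOfFin_unique hs hmem hmono]

section Det

variable {M : Matrix (Fin n) (Fin n) ℝ} {N : Matrix (Fin m) (Fin m) ℝ} {k : ℕ}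

lemma mulCompound_diagBlocks_eq (M : Matrix (Fin n) (Fin n) ℝ) (N : Matrix (Fin m) (Fin m) ℝ)
    {α β : Finset (Fin (n + m))} (hα : α.card = k) (hβ : β.card = k)
    {i : ℕ} (hαR : (splitR α).card = i) (hβR : (splitR β).card = i)
    (hαL : (splitL α).card = k - i) (hβL : (splitL β).card = k - i) :
    mulCompound k (diagBlocks M N) ⟨α, hα⟩ ⟨β, hβ⟩ =
      mulCompound (k - i) M ⟨splitL α, hαL⟩ ⟨splitL β, hβL⟩ *
      mulCompound i N ⟨splitR α, hαR⟩ ⟨splitR β, hβR⟩ := by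
  have hji : k = (k - i) + i := by
    have := card_split α; omega
  have key : (diagBlocks M N).submatrix (α.orderEmbOfFin hα) (β.orderEmbOfFin hβ) =
      ((Matrix.fromBlocks (M.submatrix ((splitL α).orderEmbOfFin hαL) ((splitL β).orderEmbOfFin hβL))
          0 0
          (N.submatrix ((splitR α).orderEmbOfFin hαR) ((splitR β).orderEmbOfFin hβR))).submatrix
        (fun p : Fin k => finSumFinEquiv.symm (Fin.cast hji p))
        (fun p : Fin k => finSumFinEquiv.symm (Fin.cast hji p))) := by
    ext p q
    rw [Matrix.submatrix_apply, Matrix.submatrix_apply, diagBlocks, Matrix.submatrix_apply,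
      orderEmbOfFin_eq_sum hα hαL hαR hji p, orderEmbOfFin_eq_sum hβ hβL hβR hji q,
      Equiv.symm_apply_apply, Equiv.symm_apply_apply]
    rcases finSumFinEquiv.symm (Fin.cast hji p) with a | a <;>
      rcases finSumFinEquiv.symm (Fin.cast hji q) with b | b <;> rfl
  rw [mulCompound, key,
    show (fun p : Fin k => finSumFinEquiv.symm (Fin.cast hji p)) =
      ⇑((finCongr hji).trans finSumFinEquiv.symm) from rfl,
    Matrix.det_submatrix_equiv_self ((finCongr hji).trans finSumFinEquiv.symm),
    Matrix.det_fromBlocks_zero₂₁]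
  rfl

lemma isRight_orderEmbOfFin_card {s : Finset (Fin (n + m))} (hs : s.card = k) :
    (Finset.univ.filter
        (fun p : Fin k => (finSumFinEquiv.symm (s.orderEmbOfFin hs p)).isRight)).card
      = (splitR s).card := by
  have hji : k = (splitL s).card + (splitR s).card := by have := card_split s; omega
  have hmap : ∀ p : Fin k, (finSumFinEquiv.symm (s.orderEmbOfFin hs p)).isRight =
      (finSumFinEquiv.symm (Fin.cast hji p)).isRight := by
    intro p
    rw [orderEmbOfFin_eq_sum hs rfl rfl hji p, Equiv.symm_apply_apply]
    rcases finSumFinEquiv.symm (Fin.cast hji p) with a | a <;> rfl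
  simp_rw [hmap]
  rw [Finset.card_filter]
  calc (∑ p : Fin k, if (finSumFinEquiv.symm (Fin.cast hji p)).isRight = true then 1 else 0)
      = ∑ q : Fin ((splitL s).card) ⊕ Fin ((splitR s).card),
          (if q.isRight = true then 1 else 0) :=
        Fintype.sum_equiv ((finCongr hji).trans finSumFinEquiv.symm) _ _ (fun p => rfl)
    _ = (splitR s).card := by
        rw [← Finset.card_filter]
        have : (Finset.univ.filter
            (fun x : Fin ((splitL s).card) ⊕ Fin ((splitR s).card) => x.isRight = true)) =
            Finset.univ.map ⟨Sum.inr, Sum.inr_injective⟩ := by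
          ext x; cases x <;> simp
        rw [this, Finset.card_map, Finset.card_univ, Fintype.card_fin]

lemma diagBlocks_apply_isRight_ne {M : Matrix (Fin n) (Fin n) ℝ} {N : Matrix (Fin m) (Fin m) ℝ}
    {x y : Fin (n + m)}
    (h : (finSumFinEquiv.symm x).isRight ≠ (finSumFinEquiv.symm y).isRight) :
    diagBlocks M N x y = 0 := by
  rw [diagBlocks, Matrix.submatrix_apply]
  rcases hsx : finSumFinEquiv.symm x with a | a <;>
    rcases hsy : finSumFinEquiv.symm y with b | b <;> rw [hsx, hsy] at h <;>
    simp at h ⊢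

lemma mulCompound_diagBlocks_ne (M : Matrix (Fin n) (Fin n) ℝ) (N : Matrix (Fin m) (Fin m) ℝ)
    {α β : Finset (Fin (n + m))} (hα : α.card = k) (hβ : β.card = k)
    (hne : (splitR α).card ≠ (splitR β).card) :
    mulCompound k (diagBlocks M N) ⟨α, hα⟩ ⟨β, hβ⟩ = 0 := by
  show ((diagBlocks M N).submatrix (α.orderEmbOfFin hα) (β.orderEmbOfFin hβ)).det = 0
  rw [Matrix.det_apply']
  apply Finset.sum_eq_zero
  intro σ _
  rcases (show ∃ c, (diagBlocks M N).submatrix (α.orderEmbOfFin hα) (β.orderEmbOfFin hβ)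
      (σ c) c = 0 by
    by_contra hall
    push_neg at hall
    have hcond : ∀ c, (finSumFinEquiv.symm (α.orderEmbOfFin hα (σ c))).isRight =
        (finSumFinEquiv.symm (β.orderEmbOfFin hβ c)).isRight := by
      intro c
      by_contra hne2
      exact hall c (by rw [Matrix.submatrix_apply]; exact diagBlocks_apply_isRight_ne hne2)
    have hcard : (Finset.univ.filter
          (fun c : Fin k => (finSumFinEquiv.symm (β.orderEmbOfFin hβ c)).isRight)).card =
        (Finset.univ.filter
          (fun r : Fin k => (finSumFinEquiv.symm (α.orderEmbOfFin hα r)).isRight)).card := by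
      apply Finset.card_bij (fun c _ => σ c)
      · intro c hc
        simp only [Finset.mem_filter, Finset.mem_univ, true_and] at hc ⊢
        rw [hcond c]; exact hc
      · intro c₁ _ c₂ _ h
        exact σ.injective h
      · intro r hr
        refine ⟨σ.symm r, ?_, by simp⟩
        simp only [Finset.mem_filter, Finset.mem_univ, true_and] at hr ⊢
        rw [← hcond (σ.symm r)]
        simpa using hr
    rw [isRight_orderEmbOfFin_card hβ, isRight_orderEmbOfFin_card hα] at hcard
    exact hne hcard.symm) with ⟨c, hc⟩
  rw [Finset.prod_eq_zero (f := fun i => (diagBlocks M N).submatrix (α.orderEmbOfFin hα)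
    (β.orderEmbOfFin hβ) (σ i) i) (Finset.mem_univ c) hc, mul_zero]

lemma mulCompound_one {N₀ k : ℕ} {R : Type*} [CommRing R]
    (α β : {s : Finset (Fin N₀) // s.card = k}) :
    mulCompound k (1 : Matrix (Fin N₀) (Fin N₀) R) α β = if α = β then 1 else 0 := by
  obtain ⟨α, hα⟩ := α
  obtain ⟨β, hβ⟩ := β
  rw [mulCompound]
  by_cases h : α = β
  · subst h
    rw [if_pos rfl]
    have : (1 : Matrix (Fin N₀) (Fin N₀) R).submatrix
        (α.orderEmbOfFin hα) (α.orderEmbOfFin hβ) = 1 := by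
      ext p q
      rw [Matrix.submatrix_apply, Matrix.one_apply, Matrix.one_apply]
      simp [Function.Injective.eq_iff (α.orderEmbOfFin hα).injective]
    rw [this, Matrix.det_one]
  · rw [if_neg (by simp [h])]
    obtain ⟨x, hxβ, hxα⟩ : ∃ x ∈ β, x ∉ α := by
      by_contra hall
      push_neg at hall
      exact h (Finset.eq_of_subset_of_card_le hall (by omega)).symm
    obtain ⟨q, hq⟩ : ∃ q, β.orderEmbOfFin hβ q = x := by
      have : x ∈ Set.range (β.orderEmbOfFin hβ) := by
        rw [Finset.range_orderEmbOfFin]; exact_mod_cast hxβ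
      exact this
    apply Matrix.det_eq_zero_of_column_eq_zero q
    intro p
    rw [Matrix.submatrix_apply, hq, Matrix.one_apply, if_neg]
    intro hcontra
    exact hxα (hcontra ▸ Finset.orderEmbOfFin_mem α hα p)

end Det

section Exp

open NormedSpace

lemma exp_fromBlocks (A : Matrix (Fin n) (Fin n) ℝ) (B : Matrix (Fin m) (Fin m) ℝ) :
    exp (Matrix.fromBlocks A 0 0 B) = Matrix.fromBlocks (exp A) 0 0 (exp B) := by
  letI : SeminormedRing (Matrix (Fin n) (Fin n) ℝ) := Matrix.linftyOpSemiNormedRing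
  letI : NormedRing (Matrix (Fin n) (Fin n) ℝ) := Matrix.linftyOpNormedRing
  letI : NormedAlgebra ℝ (Matrix (Fin n) (Fin n) ℝ) := Matrix.linftyOpNormedAlgebra
  letI : NormedAlgebra ℚ (Matrix (Fin n) (Fin n) ℝ) := Matrix.linftyOpNormedAlgebra
  letI : SeminormedRing (Matrix (Fin m) (Fin m) ℝ) := Matrix.linftyOpSemiNormedRing
  letI : NormedRing (Matrix (Fin m) (Fin m) ℝ) := Matrix.linftyOpNormedRing
  letI : NormedAlgebra ℝ (Matrix (Fin m) (Fin m) ℝ) := Matrix.linftyOpNormedAlgebra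
  letI : NormedAlgebra ℚ (Matrix (Fin m) (Fin m) ℝ) := Matrix.linftyOpNormedAlgebra
  letI : SeminormedRing (Matrix (Fin n ⊕ Fin m) (Fin n ⊕ Fin m) ℝ) :=
    Matrix.linftyOpSemiNormedRing
  letI : NormedRing (Matrix (Fin n ⊕ Fin m) (Fin n ⊕ Fin m) ℝ) := Matrix.linftyOpNormedRing
  letI : NormedAlgebra ℝ (Matrix (Fin n ⊕ Fin m) (Fin n ⊕ Fin m) ℝ) :=
    Matrix.linftyOpNormedAlgebra
  let ψ : (Matrix (Fin n) (Fin n) ℝ × Matrix (Fin m) (Fin m) ℝ) →ₗ[ℝ]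
      Matrix (Fin n ⊕ Fin m) (Fin n ⊕ Fin m) ℝ :=
    { toFun := fun p => Matrix.fromBlocks p.1 0 0 p.2
      map_add' := by
        intro p q
        show Matrix.fromBlocks (p.1 + q.1) 0 0 (p.2 + q.2) =
          Matrix.fromBlocks p.1 0 0 p.2 + Matrix.fromBlocks q.1 0 0 q.2
        rw [Matrix.fromBlocks_add]; simp
      map_smul' := by
        intro t p
        show Matrix.fromBlocks (t • p.1) 0 0 (t • p.2) = t • Matrix.fromBlocks p.1 0 0 p.2
        simp [Matrix.fromBlocks_smul] }
  let φ : Matrix (Fin n) (Fin n) ℝ × Matrix (Fin m) (Fin m) ℝ →+*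
      Matrix (Fin n ⊕ Fin m) (Fin n ⊕ Fin m) ℝ :=
    { toFun := fun p => Matrix.fromBlocks p.1 0 0 p.2
      map_one' := Matrix.fromBlocks_one
      map_mul' := by
        intro p q
        show Matrix.fromBlocks (p.1 * q.1) 0 0 (p.2 * q.2) =
          Matrix.fromBlocks p.1 0 0 p.2 * Matrix.fromBlocks q.1 0 0 q.2
        rw [Matrix.fromBlocks_multiply]
        simp
      map_zero' := Matrix.fromBlocks_zero
      map_add' := by
        intro p q
        show Matrix.fromBlocks (p.1 + q.1) 0 0 (p.2 + q.2) =
          Matrix.fromBlocks p.1 0 0 p.2 + Matrix.fromBlocks q.1 0 0 q.2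
        rw [Matrix.fromBlocks_add]; simp }
  have hφ : Continuous φ := ψ.continuous_of_finiteDimensional
  have h := map_exp φ hφ ((A, B) : _ × _)
  have hprod : exp ((A, B) : Matrix (Fin n) (Fin n) ℝ × Matrix (Fin m) (Fin m) ℝ) =
      (exp A, exp B) :=
    Prod.ext (Prod.fst_exp _) (Prod.snd_exp _)
  replace h := (congrArg φ hprod).symm.trans h
  exact h.symm

lemma exp_diagBlocks (A : Matrix (Fin n) (Fin n) ℝ) (B : Matrix (Fin m) (Fin m) ℝ) :
    exp (diagBlocks A B) = diagBlocks (exp A) (exp B) := by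
  letI : SeminormedRing (Matrix (Fin (n + m)) (Fin (n + m)) ℝ) :=
    Matrix.linftyOpSemiNormedRing
  letI : NormedRing (Matrix (Fin (n + m)) (Fin (n + m)) ℝ) := Matrix.linftyOpNormedRing
  letI : NormedAlgebra ℝ (Matrix (Fin (n + m)) (Fin (n + m)) ℝ) := Matrix.linftyOpNormedAlgebra
  letI : NormedAlgebra ℚ (Matrix (Fin (n + m)) (Fin (n + m)) ℝ) := Matrix.linftyOpNormedAlgebra
  letI : SeminormedRing (Matrix (Fin n ⊕ Fin m) (Fin n ⊕ Fin m) ℝ) :=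
    Matrix.linftyOpSemiNormedRing
  letI : NormedRing (Matrix (Fin n ⊕ Fin m) (Fin n ⊕ Fin m) ℝ) := Matrix.linftyOpNormedRing
  letI : NormedAlgebra ℝ (Matrix (Fin n ⊕ Fin m) (Fin n ⊕ Fin m) ℝ) :=
    Matrix.linftyOpNormedAlgebra
  letI : NormedAlgebra ℚ (Matrix (Fin n ⊕ Fin m) (Fin n ⊕ Fin m) ℝ) :=
    Matrix.linftyOpNormedAlgebra
  have hre : ∀ (X : Matrix (Fin n) (Fin n) ℝ) (Y : Matrix (Fin m) (Fin m) ℝ),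
      diagBlocks X Y = (Matrix.reindexAlgEquiv ℝ ℝ finSumFinEquiv) (Matrix.fromBlocks X 0 0 Y) :=
    fun _ _ => rfl
  have hcont : Continuous (Matrix.reindexAlgEquiv ℝ ℝ
      (finSumFinEquiv : Fin n ⊕ Fin m ≃ Fin (n + m))) :=
    (Matrix.reindexLinearEquiv ℝ ℝ (finSumFinEquiv : Fin n ⊕ Fin m ≃ Fin (n + m))
      finSumFinEquiv).toLinearMap.continuous_of_finiteDimensional
  rw [hre, hre, ← exp_fromBlocks]
  exact (map_exp (Matrix.reindexAlgEquiv ℝ ℝ finSumFinEquiv) hcont _).symm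

lemma diagBlocks_smul (t : ℝ) (A : Matrix (Fin n) (Fin n) ℝ) (B : Matrix (Fin m) (Fin m) ℝ) :
    t • diagBlocks A B = diagBlocks (t • A) (t • B) := by
  ext x y
  rw [Matrix.smul_apply, diagBlocks, diagBlocks, Matrix.submatrix_apply, Matrix.submatrix_apply]
  rcases finSumFinEquiv.symm x with a | a <;> rcases finSumFinEquiv.symm y with b | b <;>
    simp [Matrix.fromBlocks]

lemma entry_diffAt {N₀ : ℕ} (A : Matrix (Fin N₀) (Fin N₀) ℝ) (x y : Fin N₀) (t₀ : ℝ) :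
    DifferentiableAt ℝ (fun t : ℝ => exp (t • A) x y) t₀ := by
  letI : SeminormedRing (Matrix (Fin N₀) (Fin N₀) ℝ) := Matrix.linftyOpSemiNormedRing
  letI : NormedRing (Matrix (Fin N₀) (Fin N₀) ℝ) := Matrix.linftyOpNormedRing
  letI : NormedAlgebra ℝ (Matrix (Fin N₀) (Fin N₀) ℝ) := Matrix.linftyOpNormedAlgebra
  let L : Matrix (Fin N₀) (Fin N₀) ℝ →ₗ[ℝ] ℝ := Matrix.entryLinearMap ℝ ℝ x y
  have hL : Continuous L := L.continuous_of_finiteDimensional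
  have h := hasDerivAt_exp_smul_const (𝕂 := ℝ) A t₀
  exact (((⟨L, hL⟩ : Matrix (Fin N₀) (Fin N₀) ℝ →L[ℝ] ℝ).hasFDerivAt).comp_hasDerivAt t₀
    h).differentiableAt

lemma diffAt_mulCompound {N₀ j : ℕ} (A : Matrix (Fin N₀) (Fin N₀) ℝ)
    (α β : {s : Finset (Fin N₀) // s.card = j}) (t₀ : ℝ) :
    DifferentiableAt ℝ (fun t : ℝ => mulCompound j (exp (t • A)) α β) t₀ := by
  simp only [mulCompound, Matrix.det_apply']
  apply DifferentiableAt.fun_sum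
  intro σ _
  apply DifferentiableAt.const_mul
  apply DifferentiableAt.fun_finsetProd
  intro c _
  exact entry_diffAt A _ _ t₀

lemma mulCompound_exp_zero {N₀ j : ℕ} (A : Matrix (Fin N₀) (Fin N₀) ℝ)
    (α β : {s : Finset (Fin N₀) // s.card = j}) :
    mulCompound j (exp ((0 : ℝ) • A)) α β = if α = β then 1 else 0 := by
  rw [zero_smul, exp_zero, mulCompound_one]

end Exp

section Pointwise

open NormedSpace

lemma addCompound_diagBlocks_apply_eq (A : Matrix (Fin n) (Fin n) ℝ)
    (B : Matrix (Fin m) (Fin m) ℝ) {α β : Finset (Fin (n + m))} {k i : ℕ}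
    (hα : α.card = k) (hβ : β.card = k)
    (hαR : (splitR α).card = i) (hβR : (splitR β).card = i)
    (hαL : (splitL α).card = k - i) (hβL : (splitL β).card = k - i) :
    addCompound k (diagBlocks A B) ⟨α, hα⟩ ⟨β, hβ⟩ =
      addCompound (k - i) A ⟨splitL α, hαL⟩ ⟨splitL β, hβL⟩ *
        (if (⟨splitR α, hαR⟩ : {s : Finset (Fin m) // s.card = i}) = ⟨splitR β, hβR⟩
          then 1 else 0)
      + (if (⟨splitL α, hαL⟩ : {s : Finset (Fin n) // s.card = k - i}) = ⟨splitL β, hβL⟩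
          then 1 else 0) *
        addCompound i B ⟨splitR α, hαR⟩ ⟨splitR β, hβR⟩ := by
  have hfun : (fun t : ℝ => mulCompound k (exp (t • diagBlocks A B)) ⟨α, hα⟩ ⟨β, hβ⟩)
      = fun t => mulCompound (k - i) (exp (t • A)) ⟨splitL α, hαL⟩ ⟨splitL β, hβL⟩ *
          mulCompound i (exp (t • B)) ⟨splitR α, hαR⟩ ⟨splitR β, hβR⟩ := by
    funext t
    rw [diagBlocks_smul, exp_diagBlocks]
    exact mulCompound_diagBlocks_eq _ _ hα hβ hαR hβR hαL hβL
  show deriv (fun t : ℝ => mulCompound k (exp (t • diagBlocks A B)) ⟨α, hα⟩ ⟨β, hβ⟩) 0 = _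
  rw [hfun, deriv_fun_mul (diffAt_mulCompound A _ _ 0) (diffAt_mulCompound B _ _ 0),
    mulCompound_exp_zero, mulCompound_exp_zero]
  rfl

lemma addCompound_diagBlocks_apply_ne (A : Matrix (Fin n) (Fin n) ℝ)
    (B : Matrix (Fin m) (Fin m) ℝ) {α β : Finset (Fin (n + m))} {k : ℕ}
    (hα : α.card = k) (hβ : β.card = k) (hne : (splitR α).card ≠ (splitR β).card) :
    addCompound k (diagBlocks A B) ⟨α, hα⟩ ⟨β, hβ⟩ = 0 := by
  have hfun : (fun t : ℝ => mulCompound k (exp (t • diagBlocks A B)) ⟨α, hα⟩ ⟨β, hβ⟩)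
      = fun _ => (0 : ℝ) := by
    funext t
    rw [diagBlocks_smul, exp_diagBlocks]
    exact mulCompound_diagBlocks_ne _ _ hα hβ hne
  show deriv (fun t : ℝ => mulCompound k (exp (t • diagBlocks A B)) ⟨α, hα⟩ ⟨β, hβ⟩) 0 = 0
  rw [hfun, deriv_const]

end Pointwise

section Equivalence

def join (a : Finset (Fin n)) (b : Finset (Fin m)) : Finset (Fin (n + m)) :=
  (a.disjSum b).map finSumFinEquiv.toEmbedding

lemma mem_join {a : Finset (Fin n)} {b : Finset (Fin m)} {x : Fin (n + m)} :
    x ∈ join a b ↔ (finSumFinEquiv.symm x).elim (· ∈ a) (· ∈ b) := by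
  rw [join, Finset.mem_map_equiv]
  rcases h : finSumFinEquiv.symm x with a' | a' <;> simp [h]

lemma splitL_join (a : Finset (Fin n)) (b : Finset (Fin m)) : splitL (join a b) = a := by
  ext x
  rw [mem_splitL, mem_join, Equiv.symm_apply_apply]
  rfl

lemma splitR_join (a : Finset (Fin n)) (b : Finset (Fin m)) : splitR (join a b) = b := by
  ext x
  rw [mem_splitR, mem_join, Equiv.symm_apply_apply]
  rfl

lemma card_join (a : Finset (Fin n)) (b : Finset (Fin m)) :
    (join a b).card = a.card + b.card := by
  rw [join, Finset.card_map, Finset.card_disjSum]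

lemma join_split (s : Finset (Fin (n + m))) : join (splitL s) (splitR s) = s := by
  ext x
  rw [mem_join]
  rcases h : finSumFinEquiv.symm x with a | a
  · simp only [Sum.elim_inl]
    rw [mem_splitL, ← h, Equiv.apply_symm_apply]
  · simp only [Sum.elim_inr]
    rw [mem_splitR, ← h, Equiv.apply_symm_apply]

def eqv (n m k : ℕ) : {s : Finset (Fin (n + m)) // s.card = k} ≃
    (Σ i : ↥(Finset.Icc (k - n) (min m k)),
      ({s : Finset (Fin n) // s.card = k - i.1} × {s : Finset (Fin m) // s.card = i.1})) where
  toFun s := ⟨⟨(splitR s.1).card, by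
      have h1 := card_split s.1
      have h2 : (splitL s.1).card ≤ n := by simpa using Finset.card_le_univ (splitL s.1)
      have h3 : (splitR s.1).card ≤ m := by simpa using Finset.card_le_univ (splitR s.1)
      have h4 := s.2
      rw [Finset.mem_Icc, le_min_iff]
      omega⟩,
    (⟨splitL s.1, by
      show (splitL s.1).card = k - (splitR s.1).card
      have h1 := card_split s.1
      have h4 := s.2
      omega⟩, ⟨splitR s.1, rfl⟩)⟩
  invFun x := ⟨join x.2.1.1 x.2.2.1, by
      have h5 := x.1.2
      rw [Finset.mem_Icc, le_min_iff] at h5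
      rw [card_join, x.2.1.2, x.2.2.2]
      omega⟩
  left_inv s := Subtype.ext (join_split s.1)
  right_inv := by
    rintro ⟨⟨i, hi⟩, ⟨a, ha⟩, ⟨b, hb⟩⟩
    dsimp only
    have hcard : (splitR (join a b)).card = i := by rw [splitR_join, hb]
    subst hcard
    exact congrArg (Sigma.mk _)
      (Prod.ext (Subtype.ext (splitL_join a b)) (Subtype.ext (splitR_join a b)))

end Equivalence

section BD

lemma bd_eval {I : Type*} [DecidableEq I] {T : I → Type*}
    (F : ∀ i, Matrix (T i) (T i) ℝ) {i j : I} (h : i = j) (x : T i) (y : T j) :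
    Matrix.blockDiagonal' F ⟨i, x⟩ ⟨j, y⟩ = F i x (cast (congrArg T h.symm) y) := by
  subst h
  rw [Matrix.blockDiagonal'_apply_eq]
  exact (congrArg (F i x) (cast_eq _ y)).symm

lemma cast_pair {I : Type*} {i j : I} {fL fR : I → ℕ} (h : i = j)
    (a : Finset (Fin n)) (b : Finset (Fin m)) (ha : a.card = fL j) (hb : b.card = fR j) :
    cast (congrArg (fun i =>
        ({s : Finset (Fin n) // s.card = fL i} × {s : Finset (Fin m) // s.card = fR i})) h.symm)
      ((⟨a, ha⟩, ⟨b, hb⟩) :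
        {s : Finset (Fin n) // s.card = fL j} × {s : Finset (Fin m) // s.card = fR j}) =
      (⟨a, by rw [h]; exact ha⟩, ⟨b, by rw [h]; exact hb⟩) := by
  subst h; rfl

end BD

lemma splitR_card_mem {k : ℕ} {s : Finset (Fin (n + m))} (hs : s.card = k) :
    (splitR s).card ∈ Finset.Icc (k - n) (min m k) := by
  have h1 := card_split s
  have h2 : (splitL s).card ≤ n := by simpa using Finset.card_le_univ (splitL s)
  have h3 : (splitR s).card ≤ m := by simpa using Finset.card_le_univ (splitR s)
  rw [Finset.mem_Icc, le_min_iff]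
  omega

end ACProof

open ACProof

/-- There is a permutation matrix `P` such that
`(diag(A,B))^{[k]} = P · diag_{i∈{i₁,…,i₂}} (A^{[k-i]} ⊕ B^{[i]}) · P⁻¹`,
where `i₁ = max{0,k-n}`, `i₂ = min{m,k}`, `M^{[0]} := 0`, and `⊕` is the Kronecker
sum.  Conjugation by a permutation matrix is expressed as reindexing along a
bijection `e`. -/
theorem addCompound_diagBlocks {n m k : ℕ} (hk : 1 ≤ k) (hkn : k ≤ n + m)
    (A : Matrix (Fin n) (Fin n) ℝ) (B : Matrix (Fin m) (Fin m) ℝ) :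
    ∃ e : {s : Finset (Fin (n + m)) // s.card = k} ≃
        (Σ i : ↥(Finset.Icc (k - n) (min m k)),
          ({s : Finset (Fin n) // s.card = k - i.1} × {s : Finset (Fin m) // s.card = i.1})),
      addCompound k (diagBlocks A B) =
        (Matrix.blockDiagonal'
          (fun i : ↥(Finset.Icc (k - n) (min m k)) =>
            kroneckerSum (addCompound (k - i.1) A) (addCompound i.1 B))).submatrix e e := by
  classical
  refine ⟨eqv n m k, ?_⟩
  set F := fun i : ↥(Finset.Icc (k - n) (min m k)) =>
    kroneckerSum (addCompound (k - i.1) A) (addCompound i.1 B) with hF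
  ext ⟨α, hα⟩ ⟨β, hβ⟩
  rw [Matrix.submatrix_apply]
  by_cases h : (splitR α).card = (splitR β).card
  · have hαL : (splitL α).card = k - (splitR α).card := by
      have := card_split α; omega
    have hβL : (splitL β).card = k - (splitR α).card := by
      have := card_split β; omega
    have hβL' : (splitL β).card = k - (splitR β).card := by
      have := card_split β; omega
    rw [addCompound_diagBlocks_apply_eq A B hα hβ rfl h.symm hαL hβL]
    show _ = Matrix.blockDiagonal' F
      ⟨⟨(splitR α).card, splitR_card_mem hα⟩, (⟨splitL α, hαL⟩, ⟨splitR α, rfl⟩)⟩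
      ⟨⟨(splitR β).card, splitR_card_mem hβ⟩, (⟨splitL β, hβL'⟩, ⟨splitR β, rfl⟩)⟩
    have hidx : (⟨(splitR α).card, splitR_card_mem hα⟩ :
        ↥(Finset.Icc (k - n) (min m k))) = ⟨(splitR β).card, splitR_card_mem hβ⟩ :=
      Subtype.ext h
    rw [bd_eval F hidx,
      cast_pair (fL := fun i : ↥(Finset.Icc (k - n) (min m k)) => k - i.1)
        (fR := fun i : ↥(Finset.Icc (k - n) (min m k)) => i.1) hidx
        (splitL β) (splitR β) hβL' rfl]
    rw [hF]
    show _ = ((Matrix.kroneckerMap (· * ·) (addCompound (k - (splitR α).card) A) 1 +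
        Matrix.kroneckerMap (· * ·) 1 (addCompound ((splitR α).card) B)) :
          Matrix ({s : Finset (Fin n) // s.card = k - (splitR α).card} ×
              {s : Finset (Fin m) // s.card = (splitR α).card})
            ({s : Finset (Fin n) // s.card = k - (splitR α).card} ×
              {s : Finset (Fin m) // s.card = (splitR α).card}) ℝ)
        (⟨splitL α, hαL⟩, ⟨splitR α, rfl⟩)
        (⟨splitL β, hβL⟩, ⟨splitR β, h.symm⟩)
    rw [Matrix.add_apply, Matrix.kroneckerMap_apply, Matrix.kroneckerMap_apply,
      Matrix.one_apply, Matrix.one_apply]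
  · rw [addCompound_diagBlocks_apply_ne A B hα hβ h]
    symm
    show Matrix.blockDiagonal' F
      ⟨⟨(splitR α).card, splitR_card_mem hα⟩,
        (⟨splitL α, by
          show (splitL α).card = k - (splitR α).card
          have := card_split α; omega⟩, ⟨splitR α, rfl⟩)⟩
      ⟨⟨(splitR β).card, splitR_card_mem hβ⟩,
        (⟨splitL β, by
          show (splitL β).card = k - (splitR β).card
          have := card_split β; omega⟩, ⟨splitR β, rfl⟩)⟩ = 0
    apply Matrix.blockDiagonal'_apply_ne
    intro hc
    exact h (congrArg Subtype.val hc)
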